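/- Let T, D ∈ ℕ and K, B, M > 0. For t = 0, …, T−1 let q^t : ℝ^{t+1} → ℝ be polynomials of degree at most D with all coefficients bounded in absolute value by K, and let b̄_{t,j} ∈ ℝ (1 ≤ j ≤ t ≤ T−1) satisfy |b̄_{t,j}| ≤ B. For each n let u⁰ ∈ ℝⁿ with ‖u⁰‖_∞ ≤ M, and for any symmetric n×n real matrix X with zero diagonal define iterates u^{t+1} = X q^t(u⁰, …, u^t) − Σ_{j=1}^{t} b̄_{t,j} q^{j−1}(u⁰, …, u^{j−1}), where the functions q^t are applied coordinatewise. Then there exist constants Δ = Δ(T, D) and c = c(T, D, K, B, M), independent of n, and for each n, t ≤ T, i ≤ n an LDP w_i^t in dimension n such that: (1) u_i^t = w_i^t(X) for every such matrix X; (2) w_i^t has total degree at most Δ and ‖w_i^t‖ ≤ c; (3) every monomial of w_i^t with nonzero coefficient is connected and contains node i. -/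

import Mathlib

open MeasureTheory ProbabilityTheory Filter
open scoped ENNReal NNReal

noncomputable section

/-- Index type of the variables `x_{ij}`, `1 ≤ i < j ≤ n`. -/
abbrev Edge (n : ℕ) : Type := {e : Fin n × Fin n // e.1 < e.2}

/-- A (low-degree) polynomial in the variables `x_{ij}`, `1 ≤ i < j ≤ n`. -/
abbrev LDP (n : ℕ) : Type := MvPolynomial (Edge n) ℝ

/-- `‖p‖ = max_α |c_{p,α}|`. -/
def LDPnorm {n : ℕ} (p : LDP n) : ℝ :=
  ⨆ α : Edge n →₀ ℕ, |MvPolynomial.coeff α p|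

/-- Evaluation of an LDP at the entries `(M i j)_{i<j}` of a matrix. -/
def evalMat {n : ℕ} (p : LDP n) (M : Matrix (Fin n) (Fin n) ℝ) : ℝ :=
  MvPolynomial.eval (fun e : Edge n => M e.val.1 e.val.2) p

/-- The vertex set `V_α` of the factor graph of an exponent `α`. -/
def vertexSet {n : ℕ} (α : Edge n →₀ ℕ) : Set (Fin n) :=
  {k | ∃ e : Edge n, α e ≠ 0 ∧ (e.val.1 = k ∨ e.val.2 = k)}

/-- The factor graph `G_α`. -/
def graphOf {n : ℕ} (α : Edge n →₀ ℕ) : SimpleGraph (Fin n) where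
  Adj i j := (∃ h : i < j, α ⟨(i, j), h⟩ ≠ 0) ∨ (∃ h : j < i, α ⟨(j, i), h⟩ ≠ 0)
  symm := by constructor; intro i j h; exact h.symm
  loopless := by constructor; intro i h; rcases h with ⟨h, _⟩ | ⟨h, _⟩ <;> exact absurd h (lt_irrefl i)

/-- `x^α` is connected: all vertices of `V_α` are mutually reachable in `G_α`
(vacuously true for the constant monomial). -/
def ConnectedExp {n : ℕ} (α : Edge n →₀ ℕ) : Prop :=
  ∀ u ∈ vertexSet α, ∀ v ∈ vertexSet α, (graphOf α).Reachable u v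

/-- `G_α` is a tree. -/
def IsTreeExp {n : ℕ} (α : Edge n →₀ ℕ) : Prop :=
  ConnectedExp α ∧ (graphOf α).IsAcyclic

/-- every entry of `α` is at most 2. -/
def MaxTwo {n : ℕ} (α : Edge n →₀ ℕ) : Prop := ∀ e : Edge n, α e ≤ 2

/-- `G_α` a tree and all entries of `α` at most `2`. -/
def IsTree2 {n : ℕ} (α : Edge n →₀ ℕ) : Prop := IsTreeExp α ∧ MaxTwo α

/-- `‖α‖₁`. -/
def expDeg {n : ℕ} (α : Edge n →₀ ℕ) : ℕ := α.sum fun _ k => k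

/-- `p ∈ T_{n,2,Δ}`. -/
def MemT2 {n : ℕ} (Δ : ℕ) (p : LDP n) : Prop :=
  ∀ α : Edge n →₀ ℕ, MvPolynomial.coeff α p ≠ 0 → IsTree2 α ∧ expDeg α ≤ Δ

/-- `p` is a connected LDP. -/
def ConnectedLDP {n : ℕ} (p : LDP n) : Prop :=
  ∀ α : Edge n →₀ ℕ, MvPolynomial.coeff α p ≠ 0 → ConnectedExp α

/-- `p` contains node `i` (the constant monomial contains every node). -/
def ContainsNode {n : ℕ} (i : Fin n) (p : LDP n) : Prop :=
  ∀ α : Edge n →₀ ℕ, MvPolynomial.coeff α p ≠ 0 → α = 0 ∨ i ∈ vertexSet α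

/-- `S ⊆ p` (the constant monomial contains every node). -/
def ContainsSet {n : ℕ} (S : Finset (Fin n)) (p : LDP n) : Prop :=
  ∀ α : Edge n →₀ ℕ, MvPolynomial.coeff α p ≠ 0 → α = 0 ∨ (S : Set (Fin n)) ⊆ vertexSet α

open scoped Classical in
/-- The tree projection `p^Tr`. -/
def treeProj {n : ℕ} (p : LDP n) : LDP n :=
  ∑ α ∈ p.support, if IsTree2 α then MvPolynomial.monomial α (MvPolynomial.coeff α p) else 0

instance matrixMeasurableSpace {m n α : Type*} [MeasurableSpace α] :
    MeasurableSpace (Matrix m n α) :=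
  inferInstanceAs (MeasurableSpace (m → n → α))

/-- Build a symmetric zero-diagonal matrix out of upper-triangular entries. -/
def symmetrize {n : ℕ} (g : Edge n → ℝ) : Matrix (Fin n) (Fin n) ℝ :=
  Matrix.of fun i j =>
    if h : i < j then g ⟨(i, j), h⟩ else if h' : j < i then g ⟨(j, i), h'⟩ else 0

/-- The GOE(n) distribution, as a measure on symmetric zero-diagonal matrices:
i.i.d. `N(0, 1/n)` entries above the diagonal. -/
def GOEMeasure (n : ℕ) : Measure (Matrix (Fin n) (Fin n) ℝ) :=
  (Measure.pi fun _ : Edge n => gaussianReal 0 (n : ℝ≥0)⁻¹).map symmetrize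

/-- The law of `-(B - d/n)/√(d(1-d/n))`, `B ∼ Bernoulli(d/n)`. -/
def hatGEntry (n : ℕ) (d : ℝ) : Measure ℝ :=
  (Real.toNNReal (1 - d / n)) • Measure.dirac ((d / n) / Real.sqrt (d * (1 - d / n)))
    + (Real.toNNReal (d / n)) • Measure.dirac (-(1 - d / n) / Real.sqrt (d * (1 - d / n)))

instance hatGEntry.isFiniteMeasure (n : ℕ) (d : ℝ) : IsFiniteMeasure (hatGEntry n d) := by
  unfold hatGEntry; infer_instance

/-- The distribution `Ĝ(n, d/n)` of the centered rescaled adjacency matrix. -/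
def hatGMeasure (n : ℕ) (d : ℝ) : Measure (Matrix (Fin n) (Fin n) ℝ) :=
  (Measure.pi fun _ : Edge n => hatGEntry n d).map symmetrize

/-- `p(M) = (p_1(M),…,p_n(M))`. -/
def pEval {n : ℕ} (p : Fin n → LDP n) (M : Matrix (Fin n) (Fin n) ℝ) : Fin n → ℝ :=
  fun i => evalMat (p i) M

/-- `vᵀ M v`. -/
def quadForm {n : ℕ} (M : Matrix (Fin n) (Fin n) ℝ) (v : Fin n → ℝ) : ℝ :=
  dotProduct v (M.mulVec v)

/-- Euclidean distance from `z` to the cube `[-1,1]ⁿ`. -/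
def cubeDist {n : ℕ} (z : Fin n → ℝ) : ℝ :=
  Real.sqrt (∑ i, max (|z i| - 1) 0 ^ 2)

/-- The logistic function `φ`. -/
def logistic (z : ℝ) : ℝ := Real.exp z / (1 + Real.exp z)

/-- The smooth approximation `π_a` of the distance to `[-1,1]`. -/
def pia (a z : ℝ) : ℝ :=
  (Real.log (1 + Real.exp (a * (z - 1))) + Real.log (1 + Real.exp (a * (-z - 1)))) / a

end


noncomputable section

open MvPolynomial

variable {σ : Type*}

/-- coefficient bound -/
def CBd (C : ℝ) (p : MvPolynomial σ ℝ) : Prop := ∀ α : σ →₀ ℕ, |p.coeff α| ≤ C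

lemma CBd.nonneg {C : ℝ} {p : MvPolynomial σ ℝ} (h : CBd C p) : 0 ≤ C :=
  le_trans (abs_nonneg _) (h 0)

lemma CBd.mono {C C' : ℝ} {p : MvPolynomial σ ℝ} (h : CBd C p) (hle : C ≤ C') : CBd C' p :=
  fun α => (h α).trans hle

lemma CBd_C (a : ℝ) : CBd |a| (C a : MvPolynomial σ ℝ) := by
  intro α
  classical
  rw [coeff_C]
  split <;> simp [abs_nonneg]

lemma CBd_one : CBd 1 (1 : MvPolynomial σ ℝ) := by
  simpa using CBd_C (1 : ℝ)

lemma CBd.add {C₁ C₂ : ℝ} {p q : MvPolynomial σ ℝ} (h₁ : CBd C₁ p) (h₂ : CBd C₂ q) :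
    CBd (C₁ + C₂) (p + q) := by
  intro α
  rw [coeff_add]
  exact (abs_add_le _ _).trans (add_le_add (h₁ α) (h₂ α))

lemma CBd.sub {C₁ C₂ : ℝ} {p q : MvPolynomial σ ℝ} (h₁ : CBd C₁ p) (h₂ : CBd C₂ q) :
    CBd (C₁ + C₂) (p - q) := by
  intro α
  rw [coeff_sub]
  exact (abs_sub _ _).trans (add_le_add (h₁ α) (h₂ α))

lemma CBd.C_mul {C : ℝ} {p : MvPolynomial σ ℝ} (a : ℝ) (h : CBd C p) :
    CBd (|a| * C) (MvPolynomial.C a * p) := by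
  intro α
  rw [coeff_C_mul, abs_mul]
  exact mul_le_mul_of_nonneg_left (h α) (abs_nonneg a)

lemma CBd.finsetSum {ι : Type*} {s : Finset ι} {f : ι → MvPolynomial σ ℝ} {C : ℝ}
    (h : ∀ i ∈ s, CBd C (f i)) : CBd ((s.card : ℝ) * C) (∑ i ∈ s, f i) := by
  intro α
  rw [MvPolynomial.coeff_sum]
  calc |∑ i ∈ s, coeff α (f i)| ≤ ∑ i ∈ s, |coeff α (f i)| := Finset.abs_sum_le_sum_abs _ _
    _ ≤ ∑ _i ∈ s, C := Finset.sum_le_sum (fun i hi => h i hi α)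
    _ = (s.card : ℝ) * C := by rw [Finset.sum_const, nsmul_eq_mul]

/-- number of elements of the support is at most the ℓ¹ norm -/
lemma supp_card_le_sum (d : σ →₀ ℕ) : d.support.card ≤ ∑ i ∈ d.support, d i := by
  calc d.support.card = ∑ _i ∈ d.support, 1 := by simp
    _ ≤ ∑ i ∈ d.support, d i := Finset.sum_le_sum (fun i hi => Nat.one_le_iff_ne_zero.2 (Finsupp.mem_support_iff.1 hi))

lemma card_antidiagonal_le [DecidableEq σ] (α : σ →₀ ℕ) (E : ℕ) (h : ∑ e ∈ α.support, α e ≤ E) :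
    (Finset.HasAntidiagonal.antidiagonal α).card ≤ (E + 1) ^ E := by
  classical
  have hbd : ∀ x ∈ Finset.HasAntidiagonal.antidiagonal α, ∀ e, x.1 e ≤ α e := by
    intro x hx e
    rw [Finset.HasAntidiagonal.mem_antidiagonal] at hx
    have : x.1 e + x.2 e = α e := by rw [← Finsupp.add_apply, hx]
    omega
  have hαE : ∀ e ∈ α.support, α e ≤ E := by
    intro e he
    exact le_trans (Finset.single_le_sum (fun i _ => Nat.zero_le (α i)) he) h
  have hcard : (Finset.HasAntidiagonal.antidiagonal α).card ≤ (Finset.univ : Finset (α.support → Fin (E+1))).card := by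
    apply Finset.card_le_card_of_injOn (fun x => fun e => (⟨min (x.1 e.1) E, by omega⟩ : Fin (E+1)))
    · intro x _; exact Finset.mem_univ _
    · intro x hx y hy hxy
      have h1 : x.1 = y.1 := by
        ext e
        by_cases he : e ∈ α.support
        · have hx1 : x.1 e ≤ E := le_trans (hbd x hx e) (hαE e he)
          have hy1 : y.1 e ≤ E := le_trans (hbd y hy e) (hαE e he)
          have := congrFun hxy ⟨e, he⟩
          simpa [Fin.ext_iff, Nat.min_eq_left hx1, Nat.min_eq_left hy1] using this
        · have h0 : α e = 0 := by simpa [Finsupp.mem_support_iff] using he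
          have := hbd x hx e; have := hbd y hy e; omega
      rw [Finset.mem_coe, Finset.HasAntidiagonal.mem_antidiagonal] at hx hy
      have h2 : x.2 = y.2 := by
        have := hx.trans hy.symm
        rw [h1] at this
        exact add_left_cancel this
      exact Prod.ext h1 h2
  calc (Finset.HasAntidiagonal.antidiagonal α).card ≤ _ := hcard
    _ = (E + 1) ^ (α.support.card) := by
        rw [Finset.card_univ]; simp [Fintype.card_fun]
    _ ≤ (E + 1) ^ E := Nat.pow_le_pow_right (Nat.succ_le_succ (Nat.zero_le _))
        (le_trans (supp_card_le_sum α) h)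

lemma sum_supp_eq_zero_of_coeff {p : MvPolynomial σ ℝ} {d : σ →₀ ℕ} {D : ℕ}
    (hdeg : p.totalDegree ≤ D) (hd : D < ∑ i ∈ d.support, d i) : coeff d p = 0 :=
  coeff_eq_zero_of_totalDegree_lt (lt_of_le_of_lt hdeg hd)

lemma expSum_add (β γ : σ →₀ ℕ) :
    ∑ e ∈ (β + γ).support, (β + γ) e = (∑ e ∈ β.support, β e) + ∑ e ∈ γ.support, γ e := by
  classical
  have h1 : ∀ d : σ →₀ ℕ, ∑ e ∈ d.support, d e = d.sum fun _ k => k := fun d => rfl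
  rw [h1, h1, h1]
  exact Finsupp.sum_add_index' (fun _ => rfl) (fun _ _ _ => rfl)

lemma CBd.mul {E d₁ d₂ : ℕ} {C₁ C₂ : ℝ} {p q : MvPolynomial σ ℝ}
    (hp : p.totalDegree ≤ d₁) (hq : q.totalDegree ≤ d₂) (hE : d₁ + d₂ ≤ E)
    (h₁ : CBd C₁ p) (h₂ : CBd C₂ q) :
    CBd (((E : ℝ) + 1) ^ E * (C₁ * C₂)) (p * q) := by
  classical
  have hC₁ : 0 ≤ C₁ := h₁.nonneg
  have hC₂ : 0 ≤ C₂ := h₂.nonneg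
  have hRHS : 0 ≤ ((E : ℝ) + 1) ^ E * (C₁ * C₂) := by positivity
  intro α
  rw [coeff_mul]
  by_cases hα : ∑ e ∈ α.support, α e ≤ E
  · calc |∑ x ∈ Finset.HasAntidiagonal.antidiagonal α, coeff x.1 p * coeff x.2 q|
        ≤ ∑ x ∈ Finset.HasAntidiagonal.antidiagonal α, |coeff x.1 p * coeff x.2 q| :=
          Finset.abs_sum_le_sum_abs _ _
      _ ≤ ∑ _x ∈ Finset.HasAntidiagonal.antidiagonal α, C₁ * C₂ := by
          refine Finset.sum_le_sum (fun x _ => ?_)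
          rw [abs_mul]
          exact mul_le_mul (h₁ x.1) (h₂ x.2) (abs_nonneg _) hC₁
      _ = ((Finset.HasAntidiagonal.antidiagonal α).card : ℝ) * (C₁ * C₂) := by
          rw [Finset.sum_const, nsmul_eq_mul]
      _ ≤ ((E : ℝ) + 1) ^ E * (C₁ * C₂) := by
          refine mul_le_mul_of_nonneg_right ?_ (by positivity)
          calc ((Finset.HasAntidiagonal.antidiagonal α).card : ℝ) ≤ (((E + 1) ^ E : ℕ) : ℝ) := by
                exact_mod_cast card_antidiagonal_le α E hα
            _ = ((E : ℝ) + 1) ^ E := by push_cast; ring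
  · have hzero : ∀ x ∈ Finset.HasAntidiagonal.antidiagonal α, coeff x.1 p * coeff x.2 q = 0 := by
      intro x hx
      rw [Finset.HasAntidiagonal.mem_antidiagonal] at hx
      have hsum : (∑ e ∈ x.1.support, x.1 e) + (∑ e ∈ x.2.support, x.2 e)
          = ∑ e ∈ α.support, α e := by rw [← hx, expSum_add]
      by_cases h1 : ∑ e ∈ x.1.support, x.1 e ≤ d₁
      · have h2 : d₂ < ∑ e ∈ x.2.support, x.2 e := by omega
        rw [sum_supp_eq_zero_of_coeff hq h2, mul_zero]
      · push_neg at h1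
        rw [sum_supp_eq_zero_of_coeff hp h1, zero_mul]
    rw [Finset.sum_congr rfl hzero, Finset.sum_const, smul_zero, abs_zero]
    exact hRHS

lemma one_le_Bv (E : ℕ) : (1 : ℝ) ≤ ((E : ℝ) + 1) ^ E :=
  one_le_pow₀ (by exact_mod_cast Nat.le_add_left 1 E)

lemma CBd.pow {E δ m : ℕ} {L : ℝ} {g : MvPolynomial σ ℝ}
    (hdeg : g.totalDegree ≤ δ) (hm : δ * m ≤ E) (hg : CBd L g) (hL : 1 ≤ L) :
    (g ^ m).totalDegree ≤ δ * m ∧ CBd ((((E : ℝ) + 1) ^ E) ^ (2 * m) * L ^ m) (g ^ m) := by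
  set Bv : ℝ := ((E : ℝ) + 1) ^ E with hBv
  have hBv1 : 1 ≤ Bv := one_le_Bv E
  induction m with
  | zero => simpa using CBd_one
  | succ m ih =>
    have hm' : δ * m ≤ E := le_trans (Nat.mul_le_mul_left δ (Nat.le_succ m)) hm
    obtain ⟨ihdeg, ihCB⟩ := ih hm'
    constructor
    · rw [pow_succ]
      calc (g ^ m * g).totalDegree ≤ (g^m).totalDegree + g.totalDegree := totalDegree_mul _ _
        _ ≤ δ * m + δ := add_le_add ihdeg hdeg
        _ = δ * (m + 1) := by ring
    · rw [pow_succ]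
      have := CBd.mul (E := E) ihdeg hdeg (by rw [Nat.mul_succ] at hm; omega) ihCB hg
      refine this.mono ?_
      have h1 : Bv * (Bv ^ (2 * m) * L ^ m * L) ≤ Bv ^ (2 * m + 1) * L ^ (m + 1) := by
        rw [pow_succ, pow_succ]; ring_nf; rfl
      calc Bv * (Bv ^ (2 * m) * L ^ m * L) ≤ Bv ^ (2 * m + 1) * L ^ (m + 1) := h1
        _ ≤ Bv ^ (2 * (m + 1)) * L ^ (m + 1) := by
            refine mul_le_mul_of_nonneg_right ?_ (by positivity)
            exact pow_le_pow_right₀ hBv1 (by omega)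

lemma CBd.prodPow {ι : Type*} {E δ : ℕ} {L : ℝ} {g : ι → MvPolynomial σ ℝ} {d : ι → ℕ}
    (hdeg : ∀ i, (g i).totalDegree ≤ δ) (hg : ∀ i, CBd L (g i)) (hL : 1 ≤ L)
    (s : Finset ι) (hs : ∀ i ∈ s, 1 ≤ d i) (hcap : δ * (∑ i ∈ s, d i) ≤ E) :
    (∏ i ∈ s, g i ^ d i).totalDegree ≤ δ * ∑ i ∈ s, d i ∧
      CBd ((((E : ℝ) + 1) ^ E) ^ (3 * ∑ i ∈ s, d i) * L ^ (∑ i ∈ s, d i)) (∏ i ∈ s, g i ^ d i) := by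
  classical
  set Bv : ℝ := ((E : ℝ) + 1) ^ E with hBv
  have hBv1 : 1 ≤ Bv := one_le_Bv E
  induction s using Finset.induction with
  | empty => simpa using CBd_one
  | @insert a s ha ih =>
    have hsum : ∑ i ∈ insert a s, d i = d a + ∑ i ∈ s, d i := Finset.sum_insert ha
    have hda : 1 ≤ d a := hs a (Finset.mem_insert_self a s)
    have hcap' : δ * (∑ i ∈ s, d i) ≤ E := by
      refine le_trans ?_ hcap; rw [hsum]; exact Nat.mul_le_mul_left δ (by omega)
    obtain ⟨ihdeg, ihCB⟩ := ih (fun i hi => hs i (Finset.mem_insert_of_mem hi)) hcap'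
    have hcapa : δ * d a ≤ E := by
      refine le_trans ?_ hcap; rw [hsum]; exact Nat.mul_le_mul_left δ (by omega)
    obtain ⟨pdeg, pCB⟩ := CBd.pow (E := E) (hdeg a) hcapa (hg a) hL
    rw [Finset.prod_insert ha, hsum]
    constructor
    · calc (g a ^ d a * ∏ i ∈ s, g i ^ d i).totalDegree
          ≤ (g a ^ d a).totalDegree + (∏ i ∈ s, g i ^ d i).totalDegree := totalDegree_mul _ _
        _ ≤ δ * d a + δ * ∑ i ∈ s, d i := add_le_add pdeg ihdeg
        _ = δ * (d a + ∑ i ∈ s, d i) := by ring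
    · have := CBd.mul (E := E) pdeg ihdeg (by rw [← Nat.mul_add]; rw [hsum] at hcap; exact hcap)
        pCB ihCB
      refine this.mono ?_
      set k := ∑ i ∈ s, d i
      have hexp : Bv * (Bv ^ (2 * d a) * L ^ d a * (Bv ^ (3 * k) * L ^ k))
          = Bv ^ (2 * d a + 3 * k + 1) * L ^ (d a + k) := by
        rw [pow_add, pow_add, pow_add, pow_one]; ring
      rw [hexp]
      refine mul_le_mul (pow_le_pow_right₀ hBv1 (by omega)) le_rfl (by positivity) (by positivity)
lemma expSum_le_of_mem_support {p : MvPolynomial σ ℝ} {d : σ →₀ ℕ} (hd : d ∈ p.support) :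
    ∑ i ∈ d.support, d i ≤ p.totalDegree :=
  MvPolynomial.le_totalDegree hd

lemma CBd.aeval {ι : Type*} {D' δ E : ℕ} {K L : ℝ} {p : MvPolynomial ι ℝ}
    {g : ι → MvPolynomial σ ℝ}
    (hpdeg : p.totalDegree ≤ D') (hpc : ∀ m : ι →₀ ℕ, |coeff m p| ≤ K)
    (hgdeg : ∀ i, (g i).totalDegree ≤ δ) (hgc : ∀ i, CBd L (g i)) (hL : 1 ≤ L)
    (hcap : δ * D' ≤ E) :
    (MvPolynomial.aeval g p).totalDegree ≤ δ * D' ∧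
      CBd ((p.support.card : ℝ) * (K * ((((E : ℝ) + 1) ^ E) ^ (3 * D') * L ^ D')))
        (MvPolynomial.aeval g p) := by
  classical
  set Bv : ℝ := ((E : ℝ) + 1) ^ E with hBv
  have hBv1 : 1 ≤ Bv := one_le_Bv E
  have hK0 : 0 ≤ K := le_trans (abs_nonneg _) (hpc 0)
  have hrepr : MvPolynomial.aeval g p
      = ∑ d ∈ p.support, MvPolynomial.C (coeff d p) * ∏ i ∈ d.support, g i ^ d i := by
    rw [MvPolynomial.aeval_def, MvPolynomial.eval₂_eq]
    refine Finset.sum_congr rfl (fun d _ => ?_)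
    rw [MvPolynomial.algebraMap_eq]
  have key : ∀ d ∈ p.support,
      (MvPolynomial.C (coeff d p) * ∏ i ∈ d.support, g i ^ d i).totalDegree ≤ δ * D' ∧
      CBd (K * (Bv ^ (3 * D') * L ^ D'))
        (MvPolynomial.C (coeff d p) * ∏ i ∈ d.support, g i ^ d i) := by
    intro d hd
    have hkd : ∑ i ∈ d.support, d i ≤ D' := le_trans (expSum_le_of_mem_support hd) hpdeg
    have hcap' : δ * (∑ i ∈ d.support, d i) ≤ E := le_trans (Nat.mul_le_mul_left δ hkd) hcap
    obtain ⟨pdeg, pCB⟩ := CBd.prodPow (E := E) hgdeg hgc hL d.support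
      (fun i hi => Nat.one_le_iff_ne_zero.2 (Finsupp.mem_support_iff.1 hi)) hcap'
    constructor
    · calc (MvPolynomial.C (coeff d p) * ∏ i ∈ d.support, g i ^ d i).totalDegree
          ≤ (MvPolynomial.C (coeff d p) : MvPolynomial σ ℝ).totalDegree
            + (∏ i ∈ d.support, g i ^ d i).totalDegree := totalDegree_mul _ _
        _ = (∏ i ∈ d.support, g i ^ d i).totalDegree := by rw [totalDegree_C, zero_add]
        _ ≤ δ * (∑ i ∈ d.support, d i) := pdeg
        _ ≤ δ * D' := Nat.mul_le_mul_left δ hkd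
    · refine (pCB.C_mul (coeff d p)).mono ?_
      refine mul_le_mul (hpc d) ?_ pCB.nonneg hK0
      refine mul_le_mul (pow_le_pow_right₀ hBv1 (by omega)) (pow_le_pow_right₀ hL hkd)
        (by positivity) (by positivity)
  constructor
  · rw [hrepr]
    exact totalDegree_finsetSum_le (fun d hd => (key d hd).1)
  · rw [hrepr]
    exact CBd.finsetSum (fun d hd => (key d hd).2)
noncomputable section

open MvPolynomial

namespace AMPLdp

variable {n : ℕ}

/-- Every nonzero monomial is connected and contains node `k`. -/
def GoodAt (k : Fin n) (p : LDP n) : Prop :=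
  ∀ α : Edge n →₀ ℕ, coeff α p ≠ 0 → ConnectedExp α ∧ (α = 0 ∨ k ∈ vertexSet α)

lemma graphOf_mono {β α : Edge n →₀ ℕ} (h : ∀ e, β e ≠ 0 → α e ≠ 0) :
    graphOf β ≤ graphOf α := by
  intro i j hadj
  rcases hadj with ⟨hlt, hne⟩ | ⟨hlt, hne⟩
  · exact Or.inl ⟨hlt, h _ hne⟩
  · exact Or.inr ⟨hlt, h _ hne⟩

lemma vertexSet_mono {β α : Edge n →₀ ℕ} (h : ∀ e, β e ≠ 0 → α e ≠ 0) :
    vertexSet β ⊆ vertexSet α := by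
  rintro u ⟨e, hne, he⟩
  exact ⟨e, h e hne, he⟩

lemma apply_ne_zero_left {β γ : Edge n →₀ ℕ} (e : Edge n) (h : β e ≠ 0) : (β + γ) e ≠ 0 := by
  rw [Finsupp.add_apply]; omega

lemma apply_ne_zero_right {β γ : Edge n →₀ ℕ} (e : Edge n) (h : γ e ≠ 0) : (β + γ) e ≠ 0 := by
  rw [Finsupp.add_apply]; omega

lemma good_add {k : Fin n} {β γ : Edge n →₀ ℕ}
    (hβ : ConnectedExp β ∧ (β = 0 ∨ k ∈ vertexSet β))
    (hγ : ConnectedExp γ ∧ (γ = 0 ∨ k ∈ vertexSet γ)) :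
    ConnectedExp (β + γ) ∧ (β + γ = 0 ∨ k ∈ vertexSet (β + γ)) := by
  rcases hβ with ⟨hβc, hβk⟩
  rcases hγ with ⟨hγc, hγk⟩
  rcases hβk with hβ0 | hβk
  · rw [hβ0, zero_add]; exact ⟨hγc, hγk⟩
  rcases hγk with hγ0 | hγk
  · rw [hγ0, add_zero]; exact ⟨hβc, Or.inr hβk⟩
  have hsplit : ∀ u ∈ vertexSet (β + γ), u ∈ vertexSet β ∪ vertexSet γ := by
    rintro u ⟨e, hne, he⟩
    rw [Finsupp.add_apply] at hne
    by_cases h : β e = 0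
    · exact Or.inr ⟨e, by omega, he⟩
    · exact Or.inl ⟨e, h, he⟩
  have hkmem : k ∈ vertexSet (β + γ) := vertexSet_mono (fun e => apply_ne_zero_left e) hβk
  have hreach : ∀ u ∈ vertexSet (β + γ), (graphOf (β + γ)).Reachable u k := by
    intro u hu
    rcases hsplit u hu with hub | hug
    · exact (hβc u hub k hβk).mono (graphOf_mono (fun e => apply_ne_zero_left e))
    · exact (hγc u hug k hγk).mono (graphOf_mono (fun e => apply_ne_zero_right e))
  refine ⟨fun u hu v hv => (hreach u hu).trans (hreach v hv).symm, Or.inr hkmem⟩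

lemma GoodAt.mul {k : Fin n} {p q : LDP n} (hp : GoodAt k p) (hq : GoodAt k q) :
    GoodAt k (p * q) := by
  classical
  intro α hα
  rw [coeff_mul] at hα
  obtain ⟨x, hx, hne⟩ := Finset.exists_ne_zero_of_sum_ne_zero hα
  rw [Finset.HasAntidiagonal.mem_antidiagonal] at hx
  have h1 : coeff x.1 p ≠ 0 := fun h => hne (by rw [h, zero_mul])
  have h2 : coeff x.2 q ≠ 0 := fun h => hne (by rw [h, mul_zero])
  rw [← hx]
  exact good_add (hp x.1 h1) (hq x.2 h2)

lemma GoodAt_C (k : Fin n) (a : ℝ) : GoodAt k (MvPolynomial.C a : LDP n) := by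
  intro α hα
  classical
  rw [coeff_C] at hα
  have : (0 : Edge n →₀ ℕ) = α := by by_contra h; rw [if_neg h] at hα; exact hα rfl
  subst this
  refine ⟨fun u hu => absurd hu ?_, Or.inl rfl⟩
  rintro ⟨e, hne, _⟩
  exact hne rfl

lemma GoodAt.add {k : Fin n} {p q : LDP n} (hp : GoodAt k p) (hq : GoodAt k q) :
    GoodAt k (p + q) := by
  intro α hα
  rw [coeff_add] at hα
  by_cases h : coeff α p = 0
  · exact hq α (by rw [h, zero_add] at hα; exact hα)
  · exact hp α h

lemma GoodAt.sub {k : Fin n} {p q : LDP n} (hp : GoodAt k p) (hq : GoodAt k q) :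
    GoodAt k (p - q) := by
  intro α hα
  rw [coeff_sub] at hα
  by_cases h : coeff α p = 0
  · refine hq α ?_
    intro h2; rw [h, h2, sub_zero] at hα; exact hα rfl
  · exact hp α h

lemma GoodAt.finsetSum {k : Fin n} {ι : Type*} {s : Finset ι} {f : ι → LDP n}
    (h : ∀ i ∈ s, GoodAt k (f i)) : GoodAt k (∑ i ∈ s, f i) := by
  classical
  induction s using Finset.induction with
  | empty =>
    intro α hα; simp at hα
  | @insert a s ha ih =>
    rw [Finset.sum_insert ha]
    exact (h a (Finset.mem_insert_self a s)).add
      (ih (fun i hi => h i (Finset.mem_insert_of_mem hi)))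

lemma GoodAt.aeval {k : Fin n} {r : ℕ} {g : Fin r → LDP n} (hg : ∀ j, GoodAt k (g j))
    (p : MvPolynomial (Fin r) ℝ) : GoodAt k (MvPolynomial.aeval g p) := by
  induction p using MvPolynomial.induction_on with
  | C a => rw [MvPolynomial.aeval_C, MvPolynomial.algebraMap_eq]; exact GoodAt_C k a
  | add p q hp hq => rw [map_add]; exact hp.add hq
  | mul_X p j hp => rw [map_mul, MvPolynomial.aeval_X]; exact hp.mul (hg j)

end AMPLdp
noncomputable section
open MvPolynomial
namespace AMPLdp
variable {n : ℕ}

/-- the LDP representing the matrix entry `X i k`. -/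
def Xent (i k : Fin n) : LDP n :=
  if h : i < k then X ⟨(i, k), h⟩ else if h' : k < i then X ⟨(k, i), h'⟩ else 0

lemma connected_single_add (e : Edge n) (k : Fin n) (hk : e.val.1 = k ∨ e.val.2 = k)
    {γ : Edge n →₀ ℕ} (hγc : ConnectedExp γ) (hγk : γ = 0 ∨ k ∈ vertexSet γ) :
    ConnectedExp (Finsupp.single e 1 + γ) ∧
      ∀ i, (e.val.1 = i ∨ e.val.2 = i) → i ∈ vertexSet (Finsupp.single e 1 + γ) := by
  classical
  set α := Finsupp.single e 1 + γ with hα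
  have hαe : α e ≠ 0 := by
    simp [hα, Finsupp.add_apply, Finsupp.single_eq_same]
  have hmem : ∀ i, (e.val.1 = i ∨ e.val.2 = i) → i ∈ vertexSet α := fun i hi => ⟨e, hαe, hi⟩
  have hee : (⟨(e.val.1, e.val.2), e.property⟩ : Edge n) = e := Subtype.ext rfl
  have hadj : (graphOf α).Adj e.val.1 e.val.2 := by
    refine Or.inl ⟨e.property, ?_⟩
    rw [show (⟨(e.val.1, e.val.2), e.property⟩ : Edge n) = e from Subtype.ext rfl]
    exact hαe
  have hreach : ∀ u ∈ vertexSet α, (graphOf α).Reachable u e.val.1 := by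
    rintro u ⟨e', hne, he'⟩
    rw [Finsupp.add_apply] at hne
    by_cases hγe : γ e' = 0
    · have h1 : Finsupp.single e 1 e' ≠ 0 := by omega
      have he : e' = e := by
        by_contra h
        rw [Finsupp.single_eq_of_ne h] at h1
        exact h1 rfl
      subst he
      rcases he' with h | h
      · rw [← h]
      · rw [← h]; exact hadj.symm.reachable
    · have huγ : u ∈ vertexSet γ := ⟨e', hγe, he'⟩
      have hγne : γ ≠ 0 := by
        intro h0
        rw [h0] at hγe
        exact hγe rfl
      have hkγ : k ∈ vertexSet γ := hγk.resolve_left hγne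
      have h1 : (graphOf α).Reachable u k :=
        (hγc u huγ k hkγ).mono (graphOf_mono (fun e'' h'' => apply_ne_zero_right e'' h''))
      refine h1.trans ?_
      rcases hk with h | h
      · rw [← h]
      · rw [← h]; exact hadj.symm.reachable
  exact ⟨fun u hu v hv => (hreach u hu).trans (hreach v hv).symm, hmem⟩

lemma GoodAt_X_mul (e : Edge n) (i k : Fin n) (hi : e.val.1 = i ∨ e.val.2 = i)
    (hk : e.val.1 = k ∨ e.val.2 = k) {Q : LDP n} (hQ : GoodAt k Q) :
    GoodAt i (X e * Q) := by
  classical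
  intro α hα
  rw [coeff_mul] at hα
  obtain ⟨x, hx, hne⟩ := Finset.exists_ne_zero_of_sum_ne_zero hα
  rw [Finset.HasAntidiagonal.mem_antidiagonal] at hx
  have h1 : coeff x.1 (X e : LDP n) ≠ 0 := fun h => hne (by rw [h, zero_mul])
  have h2 : coeff x.2 Q ≠ 0 := fun h => hne (by rw [h, mul_zero])
  rw [coeff_X'] at h1
  have hx1 : x.1 = Finsupp.single e 1 := by
    by_contra h
    rw [if_neg (fun hh => h hh.symm)] at h1
    exact h1 rfl
  obtain ⟨hγc, hγk⟩ := hQ x.2 h2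
  obtain ⟨hc, hm⟩ := connected_single_add e k hk hγc hγk
  rw [← hx, hx1]
  exact ⟨hc, Or.inr (hm i hi)⟩

lemma GoodAt_zero (k : Fin n) : GoodAt k (0 : LDP n) := by
  intro α hα; simp at hα

lemma GoodAt_Xent_mul (i k : Fin n) {Q : LDP n} (hQ : GoodAt k Q) :
    GoodAt i (Xent i k * Q) := by
  unfold Xent
  split_ifs with h h'
  · exact GoodAt_X_mul _ i k (Or.inl rfl) (Or.inr rfl) hQ
  · exact GoodAt_X_mul _ i k (Or.inr rfl) (Or.inl rfl) hQ
  · rw [zero_mul]; exact GoodAt_zero i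

lemma totalDegree_Xent_mul {Q : LDP n} {d : ℕ} (hQ : Q.totalDegree ≤ d) (i k : Fin n) :
    (Xent i k * Q).totalDegree ≤ 1 + d := by
  unfold Xent
  split_ifs with h h'
  · calc (X _ * Q).totalDegree ≤ (X _ : LDP n).totalDegree + Q.totalDegree := totalDegree_mul _ _
      _ ≤ 1 + d := by rw [totalDegree_X]; omega
  · calc (X _ * Q).totalDegree ≤ (X _ : LDP n).totalDegree + Q.totalDegree := totalDegree_mul _ _
      _ ≤ 1 + d := by rw [totalDegree_X]; omega
  · rw [zero_mul]; simp

lemma CBd_X_mul {C : ℝ} {Q : LDP n} (e : Edge n) (h : CBd C Q) : CBd C (X e * Q) := by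
  classical
  intro α
  rw [mul_comm, coeff_mul_X']
  split
  · exact h _
  · rw [abs_zero]; exact h.nonneg

lemma CBd_Xent_mul {C : ℝ} {Q : LDP n} (hC : 0 ≤ C) (i k : Fin n) (h : CBd C Q) :
    CBd C (Xent i k * Q) := by
  unfold Xent
  split_ifs with h1 h2
  · exact CBd_X_mul _ h
  · exact CBd_X_mul _ h
  · rw [zero_mul]; intro α; simpa using hC

lemma coeff_X_mul_ne_zero (e : Edge n) {Q : LDP n} {α : Edge n →₀ ℕ}
    (h : coeff α (X e * Q) ≠ 0) : α e ≠ 0 := by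
  classical
  rw [mul_comm, coeff_mul_X'] at h
  by_cases hmem : e ∈ α.support
  · exact Finsupp.mem_support_iff.1 hmem
  · rw [if_neg hmem] at h; exact absurd rfl h

lemma CBd_sumXent {i : Fin n} {Q : Fin n → LDP n} {C : ℝ} (hC : 0 ≤ C) {Δ' : ℕ}
    (hdeg : ∀ k, (Xent i k * Q k).totalDegree ≤ Δ')
    (hCB : ∀ k, CBd C (Xent i k * Q k)) :
    CBd ((Δ' : ℝ) * C) (∑ k : Fin n, Xent i k * Q k) := by
  classical
  intro α
  rw [MvPolynomial.coeff_sum]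
  set S := Finset.univ.filter (fun k => coeff α (Xent i k * Q k) ≠ 0) with hS
  have hsplit : ∑ k : Fin n, coeff α (Xent i k * Q k) = ∑ k ∈ S, coeff α (Xent i k * Q k) :=
    (Finset.sum_filter_of_ne (fun x _ hx => hx)).symm
  rw [hsplit]
  rcases Finset.eq_empty_or_nonempty S with hSe | ⟨k₀, hk₀⟩
  · rw [hSe, Finset.sum_empty, abs_zero]
    positivity
  · have hk₀ne : coeff α (Xent i k₀ * Q k₀) ≠ 0 := (Finset.mem_filter.1 hk₀).2
    have hαdeg : ∑ e ∈ α.support, α e ≤ Δ' := by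
      by_contra hcon
      push_neg at hcon
      exact hk₀ne (coeff_eq_zero_of_totalDegree_lt (lt_of_le_of_lt (hdeg k₀) hcon))
    -- each k ∈ S gives a distinct edge incident to i in the support of α
    have hki : ∀ k ∈ S, i < k ∨ k < i := by
      intro k hk
      have hne : coeff α (Xent i k * Q k) ≠ 0 := (Finset.mem_filter.1 hk).2
      by_contra hcon
      have : Xent i k = 0 := by
        unfold Xent
        rw [dif_neg (fun h => hcon (Or.inl h)), dif_neg (fun h => hcon (Or.inr h))]
      rw [this, zero_mul] at hne
      simp at hne
    have hmap : ∀ k ∈ S, (if i < k then ((i, k) : Fin n × Fin n) else (k, i))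
        ∈ α.support.image Subtype.val := by
      intro k hk
      have hne : coeff α (Xent i k * Q k) ≠ 0 := (Finset.mem_filter.1 hk).2
      rcases hki k hk with h | h
      · rw [if_pos h]
        unfold Xent at hne
        rw [dif_pos h] at hne
        have := coeff_X_mul_ne_zero _ hne
        exact Finset.mem_image.2 ⟨_, Finsupp.mem_support_iff.2 this, rfl⟩
      · rw [if_neg (asymm h)]
        unfold Xent at hne
        rw [dif_neg (asymm h), dif_pos h] at hne
        have := coeff_X_mul_ne_zero _ hne
        exact Finset.mem_image.2 ⟨_, Finsupp.mem_support_iff.2 this, rfl⟩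
    have hinj : Set.InjOn (fun k => if i < k then ((i, k) : Fin n × Fin n) else (k, i)) S := by
      intro k₁ hk₁ k₂ hk₂ heq
      simp only at heq
      rcases hki k₁ hk₁ with h1 | h1 <;> rcases hki k₂ hk₂ with h2 | h2
      · rw [if_pos h1, if_pos h2] at heq
        simpa using heq
      · rw [if_pos h1, if_neg (asymm h2)] at heq
        simp only [Prod.mk.injEq] at heq
        exact absurd heq.1.symm (ne_of_lt h2)
      · rw [if_neg (asymm h1), if_pos h2] at heq
        simp only [Prod.mk.injEq] at heq
        exact absurd heq.1 (ne_of_lt h1)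
      · rw [if_neg (asymm h1), if_neg (asymm h2)] at heq
        simpa using heq
    have hcardS : S.card ≤ Δ' := by
      calc S.card ≤ (α.support.image Subtype.val).card := Finset.card_le_card_of_injOn _ hmap hinj
        _ ≤ α.support.card := Finset.card_image_le
        _ ≤ ∑ e ∈ α.support, α e := supp_card_le_sum α
        _ ≤ Δ' := hαdeg
    calc |∑ k ∈ S, coeff α (Xent i k * Q k)| ≤ ∑ k ∈ S, |coeff α (Xent i k * Q k)| :=
          Finset.abs_sum_le_sum_abs _ _
      _ ≤ ∑ _k ∈ S, C := Finset.sum_le_sum (fun k hk => hCB k α)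
      _ = (S.card : ℝ) * C := by rw [Finset.sum_const, nsmul_eq_mul]
      _ ≤ (Δ' : ℝ) * C := mul_le_mul_of_nonneg_right (by exact_mod_cast hcardS) hC

end AMPLdp
noncomputable section
open MvPolynomial
namespace AMPLdp
variable {n : ℕ}

/-- The LDP computing coordinate `i` of the AMP iterate `u^t`. -/
def wp (n : ℕ) (u0 : Fin n → ℝ) (q : ∀ t : ℕ, MvPolynomial (Fin (t + 1)) ℝ)
    (b : ℕ → ℕ → ℝ) : ℕ → Fin n → LDP n
  | 0, i => MvPolynomial.C (u0 i)
  | (t + 1), i =>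
      (∑ k : Fin n, Xent i k *
        MvPolynomial.aeval (fun idx : Fin (t + 1) => wp n u0 q b (idx : ℕ) k) (q t)) -
      ∑ j ∈ (Finset.Icc 1 t).attach,
        MvPolynomial.C (b t j.1) *
          MvPolynomial.aeval (fun idx : Fin (j.1 - 1 + 1) => wp n u0 q b (idx : ℕ) i)
            (q (j.1 - 1))
  termination_by t => t
  decreasing_by
  · exact idx.isLt
  · have hj := j.2
    rw [Finset.mem_Icc] at hj
    have := idx.isLt
    omega

end AMPLdp
noncomputable section
open MvPolynomial
namespace AMPLdp
variable {n : ℕ}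

lemma evalMat_sub (p q : LDP n) (X : Matrix (Fin n) (Fin n) ℝ) :
    evalMat (p - q) X = evalMat p X - evalMat q X := by
  unfold evalMat; rw [map_sub]

lemma evalMat_mul (p q : LDP n) (X : Matrix (Fin n) (Fin n) ℝ) :
    evalMat (p * q) X = evalMat p X * evalMat q X := by
  unfold evalMat; rw [map_mul]

lemma evalMat_C (a : ℝ) (X : Matrix (Fin n) (Fin n) ℝ) :
    evalMat (MvPolynomial.C a : LDP n) X = a := by
  unfold evalMat; rw [eval_C]

lemma evalMat_sum {ι : Type*} (s : Finset ι) (f : ι → LDP n) (X : Matrix (Fin n) (Fin n) ℝ) :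
    evalMat (∑ i ∈ s, f i) X = ∑ i ∈ s, evalMat (f i) X := by
  unfold evalMat; rw [map_sum]

lemma evalMat_aeval {r : ℕ} (g : Fin r → LDP n) (p : MvPolynomial (Fin r) ℝ)
    (X : Matrix (Fin n) (Fin n) ℝ) :
    evalMat (MvPolynomial.aeval g p) X = MvPolynomial.eval (fun j => evalMat (g j) X) p := by
  unfold evalMat
  induction p using MvPolynomial.induction_on with
  | C a => simp only [aeval_C, MvPolynomial.algebraMap_eq, eval_C]
  | add p q hp hq => simp only [map_add, hp, hq]
  | mul_X p j hp => simp only [map_mul, aeval_X, eval_X, hp]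

lemma evalMat_Xent (X : Matrix (Fin n) (Fin n) ℝ) (hs : X.IsSymm) (hd : ∀ k, X k k = 0)
    (i k : Fin n) : evalMat (Xent i k) X = X i k := by
  unfold Xent evalMat
  split_ifs with h h'
  · rw [eval_X]
  · rw [eval_X]
    exact hs.apply i k
  · have hik : i = k := le_antisymm (not_lt.1 h') (not_lt.1 h)
    rw [map_zero, hik, hd k]

lemma wp_eval (T : ℕ) (u0 : Fin n → ℝ) (q : ∀ t : ℕ, MvPolynomial (Fin (t + 1)) ℝ)
    (b : ℕ → ℕ → ℝ) (X : Matrix (Fin n) (Fin n) ℝ) (hs : X.IsSymm) (hd : ∀ k, X k k = 0)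
    (u : ℕ → Fin n → ℝ) (hu0 : u 0 = u0)
    (hrec : ∀ s : ℕ, s + 1 ≤ T →
      u (s + 1) = fun i' : Fin n =>
        X.mulVec (fun k : Fin n =>
          MvPolynomial.eval (fun idx : Fin (s + 1) => u (idx : ℕ) k) (q s)) i' -
        ∑ j ∈ Finset.Icc 1 s, b s j *
          MvPolynomial.eval (fun idx : Fin (j - 1 + 1) => u (idx : ℕ) i') (q (j - 1))) :
    ∀ t : ℕ, t ≤ T → ∀ i : Fin n, u t i = evalMat (wp n u0 q b t i) X := by
  intro t
  induction t using Nat.strong_induction_on with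
  | _ t ih =>
    match t with
    | 0 =>
      intro _ i
      rw [hu0]
      have hwp0 : wp n u0 q b 0 i = MvPolynomial.C (u0 i) := by rw [wp]
      rw [hwp0, evalMat_C]
    | (t + 1) =>
      intro hT i
      simp only [hrec t hT]
      have hwp : wp n u0 q b (t + 1) i =
          (∑ k : Fin n, Xent i k *
            MvPolynomial.aeval (fun idx : Fin (t + 1) => wp n u0 q b (idx : ℕ) k) (q t)) -
          ∑ j ∈ (Finset.Icc 1 t).attach,
            MvPolynomial.C (b t j.1) *
              MvPolynomial.aeval (fun idx : Fin (j.1 - 1 + 1) => wp n u0 q b (idx : ℕ) i)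
                (q (j.1 - 1)) := by
        rw [wp]
      rw [hwp, evalMat_sub, evalMat_sum, evalMat_sum]
      have hmv : X.mulVec (fun k : Fin n =>
          MvPolynomial.eval (fun idx : Fin (t + 1) => u (idx : ℕ) k) (q t)) i
          = ∑ k : Fin n, X i k *
              MvPolynomial.eval (fun idx : Fin (t + 1) => u (idx : ℕ) k) (q t) := rfl
      rw [hmv]
      congr 1
      · refine Finset.sum_congr rfl (fun k _ => ?_)
        rw [evalMat_mul, evalMat_Xent X hs hd, evalMat_aeval]
        have harg : (fun idx : Fin (t + 1) => u (idx : ℕ) k)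
            = fun idx : Fin (t + 1) => evalMat (wp n u0 q b (idx : ℕ) k) X := by
          funext idx
          exact ih (idx : ℕ) idx.isLt (le_trans (Nat.le_of_lt_succ idx.isLt) (by omega)) k
        rw [harg]
      · rw [← Finset.sum_attach (Finset.Icc 1 t) (fun j => b t j *
          MvPolynomial.eval (fun idx : Fin (j - 1 + 1) => u (idx : ℕ) i) (q (j - 1)))]
        refine Finset.sum_congr rfl (fun j _ => ?_)
        rw [evalMat_mul, evalMat_C, evalMat_aeval]
        have hj := j.2
        rw [Finset.mem_Icc] at hj
        have harg : (fun idx : Fin ((j : ℕ) - 1 + 1) => u (idx : ℕ) i)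
            = fun idx : Fin ((j : ℕ) - 1 + 1) => evalMat (wp n u0 q b (idx : ℕ) i) X := by
          funext idx
          have hlt : (idx : ℕ) < t + 1 := by
            have := idx.isLt
            omega
          exact ih (idx : ℕ) hlt (by omega) i
        rw [harg]

end AMPLdp
noncomputable section
open MvPolynomial
namespace AMPLdp

/-- degree bound sequence -/
def deltaF (D : ℕ) : ℕ → ℕ
  | 0 => 0
  | t + 1 => 1 + D * deltaF D t

lemma deltaF_mono (D : ℕ) : Monotone (deltaF D) := by
  apply monotone_nat_of_le_succ
  intro t
  induction t with
  | zero => simp [deltaF]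
  | succ t ih =>
    have h1 : deltaF D (t + 1) = 1 + D * deltaF D t := rfl
    have h2 : deltaF D (t + 1 + 1) = 1 + D * deltaF D (t + 1) := rfl
    rw [h1, h2]
    exact Nat.add_le_add_left (Nat.mul_le_mul_left D (by rw [h1]; exact ih.trans (by rw [h1]))) 1

/-- coefficient bound sequence -/
def cF (D : ℕ) (M A : ℝ) : ℕ → ℝ
  | 0 => max 1 M
  | t + 1 => max (cF D M A t) (A * cF D M A t ^ D)

lemma one_le_cF (D : ℕ) (M A : ℝ) (t : ℕ) : 1 ≤ cF D M A t := by
  induction t with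
  | zero => exact le_max_left 1 M
  | succ t ih => exact le_trans ih (le_max_left _ _)

lemma cF_mono (D : ℕ) (M A : ℝ) : Monotone (cF D M A) :=
  monotone_nat_of_le_succ (fun t => le_max_left _ _)

set_option maxHeartbeats 2000000 in
lemma wp_bound (T D : ℕ) (K B M : ℝ) (hK : 0 < K) (hB : 0 < B) (hM : 0 < M)
    (q : ∀ t : ℕ, MvPolynomial (Fin (t + 1)) ℝ)
    (hqdeg : ∀ t, t < T → (q t).totalDegree ≤ D)
    (hqcoeff : ∀ t, t < T → ∀ α : Fin (t + 1) →₀ ℕ, |MvPolynomial.coeff α (q t)| ≤ K)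
    (b : ℕ → ℕ → ℝ)
    (hb : ∀ t j : ℕ, 1 ≤ j → j ≤ t → t ≤ T - 1 → |b t j| ≤ B)
    (n : ℕ) (u0 : Fin n → ℝ) (hu0 : ∀ i, |u0 i| ≤ M) :
    ∀ t : ℕ, t ≤ T → ∀ i : Fin n,
      (wp n u0 q b t i).totalDegree ≤ deltaF D t ∧
      CBd (cF D M
        (((deltaF D T : ℝ) + T * B) *
          ((((Finset.range T).sup (fun s => (q s).support.card) : ℕ) : ℝ) * K *
            (((deltaF D T : ℝ) + 1) ^ (deltaF D T)) ^ (3 * D))) t) (wp n u0 q b t i) ∧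
      GoodAt i (wp n u0 q b t i) := by
  set E : ℕ := deltaF D T with hE
  set SC : ℕ := (Finset.range T).sup (fun s => (q s).support.card) with hSC
  set Bv : ℝ := ((E : ℝ) + 1) ^ E with hBv
  have hBv1 : (1 : ℝ) ≤ Bv := one_le_Bv E
  set A : ℝ := ((E : ℝ) + T * B) * ((SC : ℝ) * K * Bv ^ (3 * D)) with hA
  set cf : ℕ → ℝ := cF D M A with hcf
  intro t
  induction t using Nat.strong_induction_on with
  | _ t ih =>
    match t with
    | 0 =>
      intro _ i
      have hwp0 : wp n u0 q b 0 i = MvPolynomial.C (u0 i) := by rw [wp]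
      rw [hwp0]
      refine ⟨?_, ?_, GoodAt_C i (u0 i)⟩
      · rw [totalDegree_C]; exact Nat.zero_le _
      · exact (CBd_C (u0 i)).mono (le_trans (hu0 i) (le_max_right 1 M))
    | (t + 1) =>
      intro hT i
      have htT : t < T := hT
      set Ct : ℝ := cf t with hCt
      have hCt1 : 1 ≤ Ct := one_le_cF D M A t
      have hCt0 : 0 ≤ Ct := le_trans zero_le_one hCt1
      set Δt : ℕ := deltaF D t with hΔt
      have hΔsucc : deltaF D (t + 1) = 1 + D * Δt := rfl
      have hΔTle : deltaF D (t + 1) ≤ E := deltaF_mono D hT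
      have hcap : Δt * D ≤ E := by
        rw [Nat.mul_comm]
        omega
      -- bound on the number of monomials of q s for s < T
      have hcard : ∀ s, s < T → ((q s).support.card : ℝ) ≤ (SC : ℝ) := by
        intro s hs
        have h1 : (q s).support.card ≤ SC :=
          Finset.le_sup (f := fun s => (q s).support.card) (Finset.mem_range.2 hs)
        exact_mod_cast h1
      set QC : ℝ := (SC : ℝ) * K * Bv ^ (3 * D) * Ct ^ D with hQC
      have hQC0 : 0 ≤ QC := by
        have hSC0 : (0 : ℝ) ≤ (SC : ℝ) := Nat.cast_nonneg SC
        positivity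
      -- IH facts packaged
      have ihdeg : ∀ s : ℕ, s ≤ t → ∀ k, (wp n u0 q b s k).totalDegree ≤ Δt :=
        fun s hs k => le_trans ((ih s (by omega) (by omega) k).1) (deltaF_mono D hs)
      have ihCB : ∀ s : ℕ, s ≤ t → ∀ k, CBd Ct (wp n u0 q b s k) :=
        fun s hs k => ((ih s (by omega) (by omega) k).2.1).mono (cF_mono D M A hs)
      have ihGood : ∀ s : ℕ, s ≤ t → ∀ k, GoodAt k (wp n u0 q b s k) :=
        fun s hs k => (ih s (by omega) (by omega) k).2.2
      -- the aeval terms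
      have hQ : ∀ k, (MvPolynomial.aeval
            (fun idx : Fin (t + 1) => wp n u0 q b (idx : ℕ) k) (q t)).totalDegree ≤ Δt * D ∧
          CBd QC (MvPolynomial.aeval
            (fun idx : Fin (t + 1) => wp n u0 q b (idx : ℕ) k) (q t)) := by
        intro k
        obtain ⟨h1, h2⟩ := CBd.aeval (E := E) (hqdeg t htT) (hqcoeff t htT)
          (fun idx => ihdeg (idx : ℕ) (Nat.le_of_lt_succ idx.isLt) k)
          (fun idx => ihCB (idx : ℕ) (Nat.le_of_lt_succ idx.isLt) k) hCt1 hcap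
        refine ⟨h1, h2.mono ?_⟩
        rw [hQC]
        calc ((q t).support.card : ℝ) * (K * (Bv ^ (3 * D) * Ct ^ D))
            ≤ (SC : ℝ) * (K * (Bv ^ (3 * D) * Ct ^ D)) := by
              refine mul_le_mul_of_nonneg_right (hcard t htT) (by positivity)
          _ = (SC : ℝ) * K * Bv ^ (3 * D) * Ct ^ D := by ring
      -- sum part
      set Sum : LDP n := ∑ k : Fin n, Xent i k *
        MvPolynomial.aeval (fun idx : Fin (t + 1) => wp n u0 q b (idx : ℕ) k) (q t) with hSum
      have hSumdeg : Sum.totalDegree ≤ deltaF D (t + 1) := by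
        refine totalDegree_finsetSum_le (fun k _ => ?_)
        refine le_trans (totalDegree_Xent_mul (hQ k).1 i k) ?_
        rw [hΔsucc, Nat.mul_comm Δt D]
      have hSumCB : CBd ((deltaF D (t + 1) : ℝ) * QC) Sum := by
        refine CBd_sumXent hQC0 (fun k => ?_) (fun k => ?_)
        · refine le_trans (totalDegree_Xent_mul (hQ k).1 i k) ?_
          rw [hΔsucc, Nat.mul_comm Δt D]
        · exact CBd_Xent_mul hQC0 i k (hQ k).2
      have hSumGood : GoodAt i Sum := by
        refine GoodAt.finsetSum (fun k _ => ?_)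
        exact GoodAt_Xent_mul i k (GoodAt.aeval
          (fun idx => ihGood (idx : ℕ) (Nat.le_of_lt_succ idx.isLt) k) (q t))
      -- Onsager part
      set Ons : LDP n := ∑ j ∈ (Finset.Icc 1 t).attach,
        MvPolynomial.C (b t j.1) *
          MvPolynomial.aeval (fun idx : Fin (j.1 - 1 + 1) => wp n u0 q b (idx : ℕ) i)
            (q (j.1 - 1)) with hOns
      have hOnsTerm : ∀ j : {x // x ∈ Finset.Icc 1 t},
          (MvPolynomial.C (b t j.1) *
            MvPolynomial.aeval (fun idx : Fin (j.1 - 1 + 1) => wp n u0 q b (idx : ℕ) i)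
              (q (j.1 - 1))).totalDegree ≤ deltaF D (t + 1) ∧
          CBd (B * QC) (MvPolynomial.C (b t j.1) *
            MvPolynomial.aeval (fun idx : Fin (j.1 - 1 + 1) => wp n u0 q b (idx : ℕ) i)
              (q (j.1 - 1))) ∧
          GoodAt i (MvPolynomial.C (b t j.1) *
            MvPolynomial.aeval (fun idx : Fin (j.1 - 1 + 1) => wp n u0 q b (idx : ℕ) i)
              (q (j.1 - 1))) := by
        intro j
        have hj := j.2
        rw [Finset.mem_Icc] at hj
        have hjT : j.1 - 1 < T := by omega
        obtain ⟨h1, h2⟩ := CBd.aeval (E := E) (hqdeg (j.1 - 1) hjT) (hqcoeff (j.1 - 1) hjT)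
          (fun idx => ihdeg (idx : ℕ) (by have := idx.isLt; omega) i)
          (fun idx => ihCB (idx : ℕ) (by have := idx.isLt; omega) i) hCt1 hcap
        have hbj : |b t j.1| ≤ B := hb t j.1 hj.1 hj.2 (by omega)
        refine ⟨?_, ?_, ?_⟩
        · calc (MvPolynomial.C (b t j.1) * _).totalDegree
              ≤ (MvPolynomial.C (b t j.1) : LDP n).totalDegree + _ := totalDegree_mul _ _
            _ ≤ Δt * D := by rw [totalDegree_C, zero_add]; exact h1
            _ ≤ deltaF D (t + 1) := by rw [hΔsucc, Nat.mul_comm Δt D]; exact Nat.le_add_left _ 1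
        · refine (h2.C_mul (b t j.1)).mono ?_
          have hstep : ((q (j.1 - 1)).support.card : ℝ) * (K * (Bv ^ (3 * D) * Ct ^ D)) ≤ QC := by
            rw [hQC]
            calc ((q (j.1 - 1)).support.card : ℝ) * (K * (Bv ^ (3 * D) * Ct ^ D))
                ≤ (SC : ℝ) * (K * (Bv ^ (3 * D) * Ct ^ D)) :=
                  mul_le_mul_of_nonneg_right (hcard _ hjT) (by positivity)
              _ = (SC : ℝ) * K * Bv ^ (3 * D) * Ct ^ D := by ring
          exact mul_le_mul hbj hstep (by positivity) (le_of_lt hB)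
        · exact (GoodAt_C i (b t j.1)).mul (GoodAt.aeval
            (fun idx => ihGood (idx : ℕ) (by have := idx.isLt; omega) i) (q (j.1 - 1)))
      have hOnsdeg : Ons.totalDegree ≤ deltaF D (t + 1) :=
        totalDegree_finsetSum_le (fun j _ => (hOnsTerm j).1)
      have hOnsCB : CBd (((Finset.Icc 1 t).attach.card : ℝ) * (B * QC)) Ons :=
        CBd.finsetSum (fun j _ => (hOnsTerm j).2.1)
      have hOnsCB' : CBd ((T : ℝ) * B * QC) Ons := by
        refine hOnsCB.mono ?_
        have hcardIcc : ((Finset.Icc 1 t).attach.card : ℝ) ≤ (T : ℝ) := by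
          rw [Finset.card_attach, Nat.card_Icc]
          exact_mod_cast (by omega : t + 1 - 1 ≤ T)
        calc ((Finset.Icc 1 t).attach.card : ℝ) * (B * QC) ≤ (T : ℝ) * (B * QC) :=
              mul_le_mul_of_nonneg_right hcardIcc (by positivity)
          _ = (T : ℝ) * B * QC := by ring
      have hOnsGood : GoodAt i Ons := GoodAt.finsetSum (fun j _ => (hOnsTerm j).2.2)
      -- assemble
      have hwp : wp n u0 q b (t + 1) i = Sum - Ons := by rw [wp]
      rw [hwp]
      refine ⟨?_, ?_, hSumGood.sub hOnsGood⟩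
      · exact le_trans (totalDegree_sub Sum Ons) (max_le hSumdeg hOnsdeg)
      · refine (hSumCB.sub hOnsCB').mono ?_
        have hfin : (deltaF D (t + 1) : ℝ) * QC + (T : ℝ) * B * QC ≤ A * Ct ^ D := by
          rw [hA, hQC]
          have hEcast : (deltaF D (t + 1) : ℝ) ≤ (E : ℝ) := by exact_mod_cast hΔTle
          have h0 : (0 : ℝ) ≤ (SC : ℝ) * K * Bv ^ (3 * D) * Ct ^ D := hQC0
          nlinarith [mul_le_mul_of_nonneg_right hEcast h0]
        refine le_trans hfin ?_
        show A * Ct ^ D ≤ cf (t + 1)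
        exact le_max_right _ _
end AMPLdp

set_option maxHeartbeats 1000000 in
/-- AMP iterations with polynomial denoisers and deterministic Onsager terms are
computed by connected LDPs containing the corresponding node, with `n`-independent
degree and coefficient bounds. -/
theorem stmt_18 (T D : ℕ) (K B M : ℝ) (hK : 0 < K) (hB : 0 < B) (hM : 0 < M)
    (q : ∀ t : ℕ, MvPolynomial (Fin (t + 1)) ℝ)
    (hqdeg : ∀ t, t < T → (q t).totalDegree ≤ D)
    (hqcoeff : ∀ t, t < T → ∀ α : Fin (t + 1) →₀ ℕ, |MvPolynomial.coeff α (q t)| ≤ K)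
    (b : ℕ → ℕ → ℝ)
    (hb : ∀ t j : ℕ, 1 ≤ j → j ≤ t → t ≤ T - 1 → |b t j| ≤ B) :
    ∃ (Δ : ℕ) (c : ℝ), ∀ n : ℕ, ∀ u0 : Fin n → ℝ, (∀ i, |u0 i| ≤ M) →
      ∀ t : ℕ, t ≤ T → ∀ i : Fin n, ∃ w : LDP n,
        w.totalDegree ≤ Δ ∧ LDPnorm w ≤ c ∧
        (∀ α : Edge n →₀ ℕ, MvPolynomial.coeff α w ≠ 0 →
          ConnectedExp α ∧ (α = 0 ∨ i ∈ vertexSet α)) ∧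
        (∀ X : Matrix (Fin n) (Fin n) ℝ, X.IsSymm → (∀ k, X k k = 0) →
          ∀ u : ℕ → Fin n → ℝ, u 0 = u0 →
            (∀ s : ℕ, s + 1 ≤ T →
              u (s + 1) = fun i' : Fin n =>
                X.mulVec
                    (fun k : Fin n =>
                      MvPolynomial.eval (fun idx : Fin (s + 1) => u (idx : ℕ) k) (q s)) i' -
                  ∑ j ∈ Finset.Icc 1 s, b s j *
                    MvPolynomial.eval (fun idx : Fin (j - 1 + 1) => u (idx : ℕ) i')
                      (q (j - 1))) →
            u t i = evalMat w X) := by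
  set A : ℝ := ((AMPLdp.deltaF D T : ℝ) + T * B) *
      ((((Finset.range T).sup (fun s => (q s).support.card) : ℕ) : ℝ) * K *
        (((AMPLdp.deltaF D T : ℝ) + 1) ^ (AMPLdp.deltaF D T)) ^ (3 * D)) with hA
  refine ⟨AMPLdp.deltaF D T, AMPLdp.cF D M A T, ?_⟩
  intro n u0 hu0 t ht i
  obtain ⟨hdeg, hCB, hGood⟩ :=
    AMPLdp.wp_bound T D K B M hK hB hM q hqdeg hqcoeff b hb n u0 hu0 t ht i
  refine ⟨AMPLdp.wp n u0 q b t i, ?_, ?_, hGood, ?_⟩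
  · exact le_trans hdeg (AMPLdp.deltaF_mono D ht)
  · have hc1 : (1 : ℝ) ≤ AMPLdp.cF D M A T := AMPLdp.one_le_cF D M A T
    have h2 := hCB.mono (AMPLdp.cF_mono D M A ht)
    rw [LDPnorm]
    exact Real.iSup_le (fun α => h2 α) (le_trans zero_le_one hc1)
  · intro X hs hd u hu0' hrec
    exact AMPLdp.wp_eval T u0 q b X hs hd u hu0' hrec t ht i
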